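/- Let X = ℝⁿ with the Euclidean norm, α > 0, and let f: ℝⁿ → (-∞,∞] be proper, lower semicontinuous and bounded below. Consider the Moreau envelope f_α(x) := inf_{w}[f(w) + α‖w−x‖²]. If for a point x̄ the projection P(x̄) := {w : f(w)+α‖w−x̄‖² = f_α(x̄)} is a singleton {w̄}, then the limiting subdifferential of f_α at x̄ equals {2α(x̄−w̄)}. -/

import Mathlib

open Filter Topology Set Bornology

variable {X : Type*} [NormedAddCommGroup X] [NormedSpace ℝ X]

/-- Infimal convolution of an extended-real-valued `f` with a real-valued `φ`. -/
noncomputable def infConv (f : X → EReal) (φ : X → ℝ) (x : X) : EReal :=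
  ⨅ w, f w + ((φ (w - x) : ℝ) : EReal)

/-- ε-Fréchet subdifferential of a real-valued function. -/
def frechetSubdiff (g : X → ℝ) (ε : ℝ) (x0 : X) : Set (X →L[ℝ] ℝ) :=
  {p | ∀ η : ℝ, 0 < η → ∀ᶠ x in 𝓝 x0, p (x - x0) ≤ g x - g x0 + (ε + η) * ‖x - x0‖}

/-- ε-Fréchet subdifferential of an extended-real-valued function. -/
def frechetSubdiffE (f : X → EReal) (ε : ℝ) (x0 : X) : Set (X →L[ℝ] ℝ) :=
  {p | ∀ η : ℝ, 0 < η → ∀ᶠ x in 𝓝 x0,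
    ((p (x - x0) : ℝ) : EReal) ≤ f x - f x0 + (((ε + η) * ‖x - x0‖ : ℝ) : EReal)}

/-- Limiting (Mordukhovich) subdifferential of a real-valued function. -/
def limitingSubdiff (g : X → ℝ) (x0 : X) : Set (X →L[ℝ] ℝ) :=
  {p | ∃ (x : ℕ → X) (ε : ℕ → ℝ) (q : ℕ → X →L[ℝ] ℝ),
    (∀ k, 0 ≤ ε k) ∧ Tendsto ε atTop (𝓝 0) ∧
    Tendsto x atTop (𝓝 x0) ∧ Tendsto (fun k => g (x k)) atTop (𝓝 (g x0)) ∧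
    (∀ k, q k ∈ frechetSubdiff g (ε k) (x k)) ∧
    (∀ v : X, Tendsto (fun k => (q k) v) atTop (𝓝 (p v)))}

/-- Limiting (Mordukhovich) subdifferential of an extended-real-valued function. -/
def limitingSubdiffE (f : X → EReal) (x0 : X) : Set (X →L[ℝ] ℝ) :=
  {p | ∃ (x : ℕ → X) (ε : ℕ → ℝ) (q : ℕ → X →L[ℝ] ℝ),
    (∀ k, 0 ≤ ε k) ∧ Tendsto ε atTop (𝓝 0) ∧
    Tendsto x atTop (𝓝 x0) ∧ Tendsto (fun k => f (x k)) atTop (𝓝 (f x0)) ∧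
    (∀ k, q k ∈ frechetSubdiffE f (ε k) (x k)) ∧
    (∀ v : X, Tendsto (fun k => (q k) v) atTop (𝓝 (p v)))}

/-- Fréchet strict differentiability of an extended-real-valued function. -/
def FrechetStrictDiffAtE (f : X → EReal) (x0 : X) : Prop :=
  ∃ v : X →L[ℝ] ℝ, ∀ ε : ℝ, 0 < ε → ∃ δ > (0 : ℝ), ∀ x y : X,
    ‖x - x0‖ < δ → ‖y - x0‖ < δ →
      f x - f y - ((v (x - y) : ℝ) : EReal) ≤ ((ε * ‖x - y‖ : ℝ) : EReal) ∧
      ((-(ε * ‖x - y‖) : ℝ) : EReal) ≤ f x - f y - ((v (x - y) : ℝ) : EReal)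

/-- Local Lipschitz continuity of an extended-real-valued function around a point. -/
def LocallyLipschitzAtE (f : X → EReal) (x0 : X) : Prop :=
  ∃ ℓ : ℝ, 0 ≤ ℓ ∧ ∃ δ > (0 : ℝ), ∀ x y : X, ‖x - x0‖ < δ → ‖y - x0‖ < δ →
    f x - f y ≤ ((ℓ * ‖x - y‖ : ℝ) : EReal)


section aux
open RealInnerProductSpace

lemma quadDiff (α : ℝ) {E : Type*} [NormedAddCommGroup E] [InnerProductSpace ℝ E] (w x y : E) :
    α * ‖w - y‖ ^ 2 - α * ‖w - x‖ ^ 2 = 2 * α * ⟪x - w, y - x⟫ + α * ‖y - x‖ ^ 2 := by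
  rw [show w - y = (w - x) - (y - x) by abel, norm_sub_sq_real,
    show x - w = -(w - x) by abel, inner_neg_left]
  ring

variable {E : Type*} [NormedAddCommGroup E] [InnerProductSpace ℝ E] [FiniteDimensional ℝ E]

lemma finite_of_le' {a : EReal} (h : a ≠ ⊥) {q s : ℝ} (hle : a + (q : EReal) ≤ (s : EReal)) :
    ∃ r : ℝ, a = (r : EReal) ∧ r + q ≤ s := by
  have ht : a ≠ ⊤ := by
    rintro rfl
    rw [EReal.top_add_coe] at hle
    exact absurd hle (by simp)
  refine ⟨a.toReal, (EReal.coe_toReal ht h).symm, ?_⟩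
  rw [← EReal.coe_toReal ht h, ← EReal.coe_add, EReal.coe_le_coe_iff] at hle
  exact hle

section main
variable {α : ℝ} {f : E → EReal} {Fα : E → ℝ}

-- packaged hypotheses
variable (hα : 0 < α) (hfbot : ∀ x, f x ≠ ⊥)
  (hflsc : LowerSemicontinuous f) {c : ℝ} (hc : ∀ x, ((c : ℝ) : EReal) ≤ f x)
  (hFα : ∀ x, ((Fα x : ℝ) : EReal) = ⨅ w, f w + ((α * ‖w - x‖ ^ 2 : ℝ) : EReal))

include hFα in
lemma key_le (w x : E) : ((Fα x : ℝ) : EReal) ≤ f w + ((α * ‖w - x‖ ^ 2 : ℝ) : EReal) := by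
  rw [hFα x]; exact iInf_le _ w

include hα hfbot hflsc hc hFα in
/-- Compactness lemma: approximate minimizing sequences have subsequences converging to
a minimizer at the limit point. -/
lemma lscK {xb : E} {x w : ℕ → E} {s : ℕ → ℝ} {M : ℝ}
    (hx : Tendsto x atTop (𝓝 xb))
    (h1 : ∀ k, f (w k) + ((α * ‖w k - x k‖ ^ 2 : ℝ) : EReal) ≤ ((s k : ℝ) : EReal))
    (h2 : Tendsto s atTop (𝓝 (Fα xb))) (h3 : ∀ k, s k ≤ M) :
    ∃ (wst : E) (φ : ℕ → ℕ), StrictMono φ ∧ Tendsto (fun j => w (φ j)) atTop (𝓝 wst) ∧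
      f wst + ((α * ‖wst - xb‖ ^ 2 : ℝ) : EReal) = ((Fα xb : ℝ) : EReal) := by
  choose r hr hr2 using fun k => finite_of_le' (hfbot (w k)) (h1 k)
  have hcr : ∀ k, c ≤ r k := fun k => by
    have := hc (w k); rw [hr k] at this; exact_mod_cast this
  -- bound on ‖w k - x k‖
  have hq : ∀ k, ‖w k - x k‖ ^ 2 ≤ (M - c) / α := fun k => by
    have h := hr2 k
    have := hcr k
    have := h3 k
    rw [le_div_iff₀ hα]
    nlinarith
  have hqb : ∀ k, ‖w k - x k‖ ≤ Real.sqrt ((M - c) / α) := fun k => by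
    have := hq k
    nlinarith [Real.sq_sqrt (le_trans (sq_nonneg ‖w k - x k‖) this),
      Real.sqrt_nonneg ((M - c) / α), norm_nonneg (w k - x k)]
  -- bound on ‖x k‖
  obtain ⟨B, hB⟩ : ∃ B, ∀ k, ‖x k‖ ≤ B := by
    obtain ⟨B, hB⟩ := (hx.norm).bddAbove_range
    exact ⟨B, fun k => hB ⟨k, rfl⟩⟩
  set R := Real.sqrt ((M - c) / α) + B with hR
  have hwb : ∀ k, w k ∈ Metric.closedBall (0 : E) R := fun k => by
    rw [Metric.mem_closedBall, dist_zero_right]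
    calc ‖w k‖ ≤ ‖w k - x k‖ + ‖x k‖ := by
          simpa using norm_add_le (w k - x k) (x k)
      _ ≤ R := add_le_add (hqb k) (hB k)
  obtain ⟨wst, _, φ1, hφ1, hwφ1⟩ :=
    (isCompact_closedBall (0 : E) R).tendsto_subseq hwb
  have hrb : ∀ j, r (φ1 j) ∈ Icc c M := fun j =>
    ⟨hcr _, by nlinarith [hr2 (φ1 j), h3 (φ1 j), sq_nonneg ‖w (φ1 j) - x (φ1 j)‖, hα]⟩
  obtain ⟨rst, _, φ2, hφ2, hrφ2⟩ := (isCompact_Icc (a := c) (b := M)).tendsto_subseq hrb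
  set φ := φ1 ∘ φ2 with hφdef
  have hφ : StrictMono φ := hφ1.comp hφ2
  have hwφ : Tendsto (fun j => w (φ j)) atTop (𝓝 wst) := hwφ1.comp hφ2.tendsto_atTop
  have hxφ : Tendsto (fun j => x (φ j)) atTop (𝓝 xb) := hx.comp hφ.tendsto_atTop
  have hsφ : Tendsto (fun j => s (φ j)) atTop (𝓝 (Fα xb)) := h2.comp hφ.tendsto_atTop
  -- limit inequality
  have hlim : Tendsto (fun j => r (φ j) + α * ‖w (φ j) - x (φ j)‖ ^ 2) atTop
      (𝓝 (rst + α * ‖wst - xb‖ ^ 2)) := by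
    exact hrφ2.add (((((hwφ.sub hxφ).norm).pow 2).const_mul α))
  have hineq : rst + α * ‖wst - xb‖ ^ 2 ≤ Fα xb :=
    le_of_tendsto_of_tendsto' hlim hsφ (fun j => hr2 (φ j))
  -- lsc gives f wst ≤ rst
  have hlsc : f wst ≤ ((rst : ℝ) : EReal) := by
    by_contra hcon
    push_neg at hcon
    obtain ⟨y, hy1, hy2⟩ := exists_between hcon
    have hyt : y ≠ ⊤ := (hy2.trans_le le_top).ne
    have hyb : y ≠ ⊥ := by
      rintro rfl; exact absurd hy1 (by simp)
    lift y to ℝ using ⟨hyt, hyb⟩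
    have hev1 : ∀ᶠ j in atTop, (y : EReal) < f (w (φ j)) :=
      hwφ.eventually (hflsc wst _ hy2)
    have hev2 : ∀ᶠ j in atTop, r (φ j) < y := hrφ2.eventually_lt_const (by exact_mod_cast hy1)
    obtain ⟨j, h1', h2'⟩ := (hev1.and hev2).exists
    rw [hr (φ j)] at h1'
    exact absurd h2' (not_lt.2 (le_of_lt (by exact_mod_cast h1')))
  refine ⟨wst, φ, hφ, hwφ, le_antisymm ?_ (key_le hFα wst xb)⟩
  calc f wst + ((α * ‖wst - xb‖ ^ 2 : ℝ) : EReal)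
      ≤ ((rst : ℝ) : EReal) + ((α * ‖wst - xb‖ ^ 2 : ℝ) : EReal) :=
        add_le_add hlsc le_rfl
    _ = ((rst + α * ‖wst - xb‖ ^ 2 : ℝ) : EReal) := by rw [← EReal.coe_add]
    _ ≤ ((Fα xb : ℝ) : EReal) := by exact_mod_cast hineq
include hα hfbot hflsc hc hFα in
lemma existsMin (x : E) :
    ∃ w, f w + ((α * ‖w - x‖ ^ 2 : ℝ) : EReal) = ((Fα x : ℝ) : EReal) := by
  have hex : ∀ k : ℕ, ∃ w, f w + ((α * ‖w - x‖ ^ 2 : ℝ) : EReal)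
      ≤ ((Fα x + 1 / (k + 1) : ℝ) : EReal) := by
    intro k
    have hlt : ((Fα x : ℝ) : EReal) < ((Fα x + 1 / (k + 1) : ℝ) : EReal) := by
      exact_mod_cast lt_add_of_pos_right _ (by positivity)
    rw [hFα x, iInf_lt_iff] at hlt
    obtain ⟨w, hw⟩ := hlt
    exact ⟨w, hw.le⟩
  choose w hw using hex
  have h2 : Tendsto (fun k : ℕ => Fα x + 1 / (k + 1 : ℝ)) atTop (𝓝 (Fα x)) := by
    simpa using (tendsto_const_nhds (x := Fα x)).add (tendsto_one_div_add_atTop_nhds_zero_nat (𝕜 := ℝ))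
  obtain ⟨wst, φ, _, _, hmin⟩ := lscK hα hfbot hflsc hc hFα (x := fun _ => x) (M := Fα x + 1)
    tendsto_const_nhds hw h2 (fun k => by
      have : 1 / ((k : ℝ) + 1) ≤ 1 := by
        rw [div_le_one (by positivity)]; linarith [Nat.cast_nonneg (α := ℝ) k]
      linarith)
  exact ⟨wst, hmin⟩

include hα hfbot hflsc hc hFα in
/-- Projections at nearby points converge to the unique projection. -/
lemma projConv {x0 w0 : E} {x w : ℕ → E}
    (hx : Tendsto x atTop (𝓝 x0))
    (hwm : ∀ k, f (w k) + ((α * ‖w k - x k‖ ^ 2 : ℝ) : EReal) = ((Fα (x k) : ℝ) : EReal))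
    (hw0 : f w0 + ((α * ‖w0 - x0‖ ^ 2 : ℝ) : EReal) = ((Fα x0 : ℝ) : EReal))
    (huniq : ∀ w', f w' + ((α * ‖w' - x0‖ ^ 2 : ℝ) : EReal) = ((Fα x0 : ℝ) : EReal) → w' = w0) :
    Tendsto w atTop (𝓝 w0) := by
  obtain ⟨r0, hr0, hr0'⟩ := finite_of_le' (hfbot w0) hw0.le
  have hr0'' : r0 + α * ‖w0 - x0‖ ^ 2 = Fα x0 := by
    have := hw0; rw [hr0, ← EReal.coe_add] at this; exact_mod_cast this
  set s : ℕ → ℝ := fun k => r0 + α * ‖w0 - x k‖ ^ 2 with hs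
  have h1 : ∀ k, f (w k) + ((α * ‖w k - x k‖ ^ 2 : ℝ) : EReal) ≤ ((s k : ℝ) : EReal) := by
    intro k
    rw [hwm k]
    calc ((Fα (x k) : ℝ) : EReal) ≤ f w0 + ((α * ‖w0 - x k‖ ^ 2 : ℝ) : EReal) :=
          key_le hFα w0 (x k)
      _ = ((s k : ℝ) : EReal) := by rw [hr0, ← EReal.coe_add]
  have h2 : Tendsto s atTop (𝓝 (Fα x0)) := by
    rw [← hr0'']
    exact tendsto_const_nhds.add ((((tendsto_const_nhds.sub hx).norm).pow 2).const_mul α)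
  obtain ⟨M, hM⟩ : ∃ M, ∀ k, s k ≤ M := by
    obtain ⟨M, hM⟩ := h2.bddAbove_range
    exact ⟨M, fun k => hM ⟨k, rfl⟩⟩
  apply tendsto_of_subseq_tendsto
  intro ns hns
  obtain ⟨wst, φ, _, hconv, hmin⟩ := lscK hα hfbot hflsc hc hFα (x := fun j => x (ns j))
    (hx.comp hns) (fun j => h1 (ns j)) (h2.comp hns) (fun j => hM (ns j))
  rw [huniq wst hmin] at hconv
  exact ⟨φ, hconv⟩
include hα hfbot hFα in
lemma epsEstimate {x w : E} (hmin : f w + ((α * ‖w - x‖ ^ 2 : ℝ) : EReal) = ((Fα x : ℝ) : EReal))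
    {ε : ℝ} {q : E →L[ℝ] ℝ} (hq : q ∈ frechetSubdiff Fα ε x) (v : E) :
    q v ≤ 2 * α * ⟪x - w, v⟫ + ε * ‖v‖ := by
  obtain ⟨r, hr, _⟩ := finite_of_le' (hfbot w) hmin.le
  have hrx : r + α * ‖w - x‖ ^ 2 = Fα x := by
    have := hmin; rw [hr, ← EReal.coe_add] at this; exact_mod_cast this
  have hub : ∀ y : E, Fα y ≤ r + α * ‖w - y‖ ^ 2 := by
    intro y
    have := key_le hFα w y
    rw [hr, ← EReal.coe_add] at this
    exact_mod_cast this
  refine le_of_forall_pos_le_add fun ss hss => ?_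
  have hη : (0 : ℝ) < ss / (2 * (‖v‖ + 1)) := by positivity
  obtain ⟨δ, hδ, hball⟩ := Metric.eventually_nhds_iff.1 (hq _ hη)
  set t : ℝ := min (δ / (2 * (‖v‖ + 1))) (ss / (2 * (α * ‖v‖ ^ 2 + 1))) with ht
  have htpos : 0 < t := lt_min (by positivity) (by positivity)
  have hyd : dist (x + t • v) x < δ := by
    rw [dist_eq_norm, add_sub_cancel_left, norm_smul, Real.norm_eq_abs,
      abs_of_pos htpos]
    calc t * ‖v‖ ≤ (δ / (2 * (‖v‖ + 1))) * (‖v‖ + 1) :=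
          mul_le_mul (min_le_left _ _) (by linarith) (norm_nonneg v) (by positivity)
      _ = δ / 2 := by
          have hv0 : ‖v‖ + 1 ≠ 0 := by positivity
          field_simp
      _ < δ := by linarith
  have hkey := hball hyd
  rw [add_sub_cancel_left, map_smul, smul_eq_mul, norm_smul, Real.norm_eq_abs,
    abs_of_pos htpos] at hkey
  have hFdiff : Fα (x + t • v) - Fα x ≤ 2 * α * ⟪x - w, t • v⟫ + α * ‖t • v‖ ^ 2 := by
    have h1 := hub (x + t • v)
    have h2 := quadDiff α w x (x + t • v)
    rw [add_sub_cancel_left] at h2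
    nlinarith [h2]
  have hinner : ⟪x - w, t • v⟫ = t * ⟪x - w, v⟫ := real_inner_smul_right _ _ _
  have hns : ‖t • v‖ = t * ‖v‖ := by
    rw [norm_smul, Real.norm_eq_abs, abs_of_pos htpos]
  rw [hinner, hns] at hFdiff
  -- combine: t * q v ≤ 2αt⟪x-w,v⟫ + αt²‖v‖² + (ε+η)t‖v‖
  have hcomb : t * q v ≤ 2 * α * (t * ⟪x - w, v⟫) + α * (t * ‖v‖) ^ 2
      + (ε + ss / (2 * (‖v‖ + 1))) * (t * ‖v‖) := by linarith
  have hdiv : q v ≤ 2 * α * ⟪x - w, v⟫ + α * t * ‖v‖ ^ 2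
      + ε * ‖v‖ + (ss / (2 * (‖v‖ + 1))) * ‖v‖ := by
    have := mul_le_mul_of_nonneg_left hcomb (le_of_lt (inv_pos.2 htpos))
    rw [← mul_assoc, inv_mul_cancel₀ htpos.ne', one_mul] at this
    calc q v = t⁻¹ * (t * q v) := by field_simp
      _ ≤ t⁻¹ * (2 * α * (t * ⟪x - w, v⟫) + α * (t * ‖v‖) ^ 2
          + (ε + ss / (2 * (‖v‖ + 1))) * (t * ‖v‖)) :=
        mul_le_mul_of_nonneg_left hcomb (le_of_lt (inv_pos.2 htpos))
      _ = 2 * α * ⟪x - w, v⟫ + α * t * ‖v‖ ^ 2 + ε * ‖v‖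
          + (ss / (2 * (‖v‖ + 1))) * ‖v‖ := by field_simp; ring
  have hb1 : α * t * ‖v‖ ^ 2 ≤ ss / 2 := by
    have h1 : t ≤ ss / (2 * (α * ‖v‖ ^ 2 + 1)) := min_le_right _ _
    rw [le_div_iff₀ (by positivity)] at h1
    nlinarith [htpos.le, sq_nonneg ‖v‖]
  have hb2 : (ss / (2 * (‖v‖ + 1))) * ‖v‖ ≤ ss / 2 := by
    rw [div_mul_eq_mul_div, div_le_div_iff₀ (by positivity) (by norm_num)]
    nlinarith [norm_nonneg v]
  linarith

include hα hfbot hflsc hc hFα in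
/-- Nearby points admit minimizers close to the unique projection. -/
lemma nearbyMin {x0 w0 : E}
    (hw0 : f w0 + ((α * ‖w0 - x0‖ ^ 2 : ℝ) : EReal) = ((Fα x0 : ℝ) : EReal))
    (huniq : ∀ w', f w' + ((α * ‖w' - x0‖ ^ 2 : ℝ) : EReal) = ((Fα x0 : ℝ) : EReal) → w' = w0)
    {δ : ℝ} (hδ : 0 < δ) :
    ∀ᶠ y in 𝓝 x0, ∃ w, f w + ((α * ‖w - y‖ ^ 2 : ℝ) : EReal) = ((Fα y : ℝ) : EReal) ∧
      ‖w - w0‖ < δ := by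
  by_contra hcon
  rw [Filter.not_eventually] at hcon
  obtain ⟨y, hy, hyprop⟩ := frequently_iff_seq_forall.1 hcon
  choose w hw using fun k => existsMin hα hfbot hflsc hc hFα (y k)
  have hwconv := projConv hα hfbot hflsc hc hFα hy hw hw0 huniq
  have : ∀ᶠ k in atTop, ‖w k - w0‖ < δ := by
    have := (hwconv.sub_const w0).norm
    simpa using this.eventually_lt_const (by simpa using hδ)
  obtain ⟨k, hk⟩ := this.exists
  exact hyprop k ⟨w k, hw k, hk⟩


end main
end aux


/-- limiting subdifferential of the Moreau envelope at a point with a unique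
projection. -/
theorem stmt_19 (n : ℕ) (α : ℝ) (hα : 0 < α)
    (f : EuclideanSpace ℝ (Fin n) → EReal)
    (hfbot : ∀ x, f x ≠ ⊥) (hfprop : ∃ x, f x ≠ ⊤)
    (hflsc : LowerSemicontinuous f)
    (hbdd : ∃ c : ℝ, ∀ x, ((c : ℝ) : EReal) ≤ f x)
    (Fα : EuclideanSpace ℝ (Fin n) → ℝ)
    (hFα : ∀ x, ((Fα x : ℝ) : EReal) = ⨅ w, f w + ((α * ‖w - x‖ ^ 2 : ℝ) : EReal))
    (x0 w0 : EuclideanSpace ℝ (Fin n))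
    (hproj : {w : EuclideanSpace ℝ (Fin n) |
        f w + ((α * ‖w - x0‖ ^ 2 : ℝ) : EReal) = ((Fα x0 : ℝ) : EReal)} = {w0}) :
    limitingSubdiff Fα x0 =
      {(2 * α) • (InnerProductSpace.toDual ℝ (EuclideanSpace ℝ (Fin n)) (x0 - w0) :
        EuclideanSpace ℝ (Fin n) →L[ℝ] ℝ)} := by
    classical
  obtain ⟨c, hc⟩ := hbdd
  obtain ⟨hw0mem, huniq'⟩ := Set.eq_singleton_iff_unique_mem.mp hproj
  have hw0 : f w0 + ((α * ‖w0 - x0‖ ^ 2 : ℝ) : EReal) = ((Fα x0 : ℝ) : EReal) := hw0mem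
  have huniq : ∀ w', f w' + ((α * ‖w' - x0‖ ^ 2 : ℝ) : EReal) = ((Fα x0 : ℝ) : EReal) →
      w' = w0 := fun w' h => huniq' w' h
  set T : EuclideanSpace ℝ (Fin n) →L[ℝ] ℝ :=
    (2 * α) • (InnerProductSpace.toDual ℝ (EuclideanSpace ℝ (Fin n)) (x0 - w0)) with hT
  have hTapp : ∀ u, T u = 2 * α * (inner ℝ (x0 - w0) u : ℝ) := fun u => by
    rw [hT, ContinuousLinearMap.smul_apply, InnerProductSpace.toDual_apply_apply, smul_eq_mul]
  ext p
  simp only [Set.mem_singleton_iff]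
  constructor
  · rintro ⟨x, ε, q, hε0, hεlim, hxlim, -, hqf, hqlim⟩
    choose w hw using fun k => existsMin hα hfbot hflsc hc hFα (x k)
    have hwconv : Tendsto w atTop (𝓝 w0) :=
      projConv hα hfbot hflsc hc hFα hxlim hw hw0 huniq
    refine ContinuousLinearMap.ext fun v => ?_
    have hA : ∀ k, q k v ≤ 2 * α * (inner ℝ (x k - w k) v : ℝ) + ε k * ‖v‖ :=
      fun k => epsEstimate hα hfbot hFα (hw k) (hqf k) v
    have hB : ∀ k, 2 * α * (inner ℝ (x k - w k) v : ℝ) - ε k * ‖v‖ ≤ q k v := fun k => by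
      have h := epsEstimate hα hfbot hFα (hw k) (hqf k) (-v)
      rw [map_neg, inner_neg_right, norm_neg] at h
      linarith
    have hlim1 : Tendsto (fun k => 2 * α * (inner ℝ (x k - w k) v : ℝ)) atTop
        (𝓝 (2 * α * (inner ℝ (x0 - w0) v : ℝ))) :=
      (Filter.Tendsto.inner (hxlim.sub hwconv) tendsto_const_nhds).const_mul _
    have hεv : Tendsto (fun k => ε k * ‖v‖) atTop (𝓝 0) := by
      simpa using hεlim.mul_const ‖v‖
    have hq : Tendsto (fun k => q k v) atTop (𝓝 (2 * α * (inner ℝ (x0 - w0) v : ℝ))) := by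
      refine tendsto_of_tendsto_of_tendsto_of_le_of_le ?_ ?_ hB hA
      · simpa using hlim1.sub hεv
      · simpa using hlim1.add hεv
    rw [tendsto_nhds_unique (hqlim v) hq, hTapp v]
  · rintro rfl
    refine ⟨fun _ => x0, fun _ => 0, fun _ => T, fun _ => le_refl 0, tendsto_const_nhds,
      tendsto_const_nhds, tendsto_const_nhds, fun k => ?_, fun v => tendsto_const_nhds⟩
    intro η hη
    have hnear := nearbyMin hα hfbot hflsc hc hFα hw0 huniq
      (δ := η / (2 * α)) (by positivity)
    filter_upwards [hnear] with y hy
    obtain ⟨w, hwmin, hwclose⟩ := hy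
    obtain ⟨r, hr, -⟩ := finite_of_le' (hfbot w) hwmin.le
    have hry : r + α * ‖w - y‖ ^ 2 = Fα y := by
      have := hwmin; rw [hr, ← EReal.coe_add] at this; exact_mod_cast this
    have hlb : Fα x0 ≤ r + α * ‖w - x0‖ ^ 2 := by
      have := key_le hFα w x0
      rw [hr, ← EReal.coe_add] at this
      exact_mod_cast this
    have hquad := quadDiff α w x0 y
    have hinner : (inner ℝ (x0 - w0) (y - x0) : ℝ) =
        (inner ℝ (x0 - w) (y - x0) : ℝ) + (inner ℝ (w - w0) (y - x0) : ℝ) := by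
      rw [← inner_add_left, show x0 - w + (w - w0) = x0 - w0 by abel]
    have hCS : (inner ℝ (w - w0) (y - x0) : ℝ) ≤ ‖w - w0‖ * ‖y - x0‖ :=
      real_inner_le_norm _ _
    have h2a : 2 * α * ‖w - w0‖ ≤ η := by
      rw [lt_div_iff₀ (by positivity)] at hwclose
      linarith
    rw [hTapp]
    have hmul : 2 * α * ‖w - w0‖ * ‖y - x0‖ ≤ η * ‖y - x0‖ :=
      mul_le_mul_of_nonneg_right h2a (norm_nonneg _)
    have hmul2 : 2 * α * (inner ℝ (w - w0) (y - x0) : ℝ) ≤ 2 * α * (‖w - w0‖ * ‖y - x0‖) :=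
      mul_le_mul_of_nonneg_left hCS (by positivity)
    nlinarith [sq_nonneg ‖y - x0‖, norm_nonneg (y - x0)]
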